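/- Let x ∈ C⁴(I;ℝ²) with c₀ ≤ |x_ρ| ≤ C₀ on I, and define on the uniform grid ρ_j = jh the quantities q_j = |x_j − x_{j-1}|/h. Then (q_j + q_{j+1})/2 = |x_ρ(ρ_j)| + O(h²), i.e. there exists a constant C depending only on x such that |(q_j + q_{j+1})/2 − |x_ρ(ρ_j)|| ≤ C h² for all j and all sufficiently small h. -/

import Mathlib

open scoped RealInnerProductSpace
open Set

noncomputable section

abbrev E2 := EuclideanSpace ℝ (Fin 2)

/-- Clockwise rotation through π/2. -/
def rot (v : E2) : E2 := (WithLp.equiv 2 (Fin 2 → ℝ)).symm ![v 1, -v 0]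

/- ### Auxiliary lemmas -/

/-- The derivative of a 1-periodic function is 1-periodic. -/
lemma aux_periodic_deriv (f : ℝ → E2) (hp : Function.Periodic f 1) :
    Function.Periodic (deriv f) 1 := by
  intro t
  have h1 : (fun s => f (s + 1)) = f := funext hp
  have h2 : deriv (fun s => f (s + 1)) t = deriv f (t + 1) :=
    deriv_comp_add_const (f := f) (a := 1) (x := t)
  rw [h1] at h2
  exact h2.symm

/-- A continuous 1-periodic function is bounded. -/
lemma aux_bound_of_periodic (f : ℝ → E2) (hc : Continuous f)
    (hp : Function.Periodic f 1) : ∃ K : ℝ, 0 ≤ K ∧ ∀ t, ‖f t‖ ≤ K := by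
  obtain ⟨K, hK⟩ := (isCompact_Icc (a := (0:ℝ)) (b := 1)).exists_bound_of_continuousOn
    hc.continuousOn
  refine ⟨max K 0, le_max_right _ _, fun t => ?_⟩
  have hfr : f (Int.fract t) = f t := by
    have := hp.sub_int_mul_eq (x := t) (n := ⌊t⌋)
    unfold Int.fract
    simpa using this
  have hmem : Int.fract t ∈ Icc (0:ℝ) 1 :=
    ⟨Int.fract_nonneg t, (Int.fract_lt_one t).le⟩
  calc ‖f t‖ = ‖f (Int.fract t)‖ := by rw [hfr]
    _ ≤ K := hK _ hmem
    _ ≤ max K 0 := le_max_left _ _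

/-- Lipschitz estimate from a global derivative bound. -/
lemma aux_lip (f f' : ℝ → E2) (hf : ∀ t, HasDerivAt f (f' t) t)
    (K : ℝ) (hK : ∀ t, ‖f' t‖ ≤ K) (a b : ℝ) : ‖f b - f a‖ ≤ K * |b - a| := by
  have main : ∀ p q : ℝ, p ≤ q → ‖f q - f p‖ ≤ K * (q - p) := by
    intro p q hpq
    exact norm_image_sub_le_of_norm_deriv_le_segment'
      (f := f) (f' := f') (a := p) (b := q) (C := K)
      (fun t _ => (hf t).hasDerivWithinAt) (fun t _ => hK t) q (right_mem_Icc.2 hpq)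
  rcases le_total a b with hab | hab
  · rw [abs_of_nonneg (by linarith)]; exact main a b hab
  · rw [abs_of_nonpos (by linarith), norm_sub_rev]
    have := main b a hab
    linarith

/-- First-order Taylor estimate with Lipschitz derivative. -/
lemma aux_taylor1 (f f' : ℝ → E2) (hf : ∀ t, HasDerivAt f (f' t) t)
    (K : ℝ) (hK0 : 0 ≤ K) (hlip : ∀ a b : ℝ, ‖f' b - f' a‖ ≤ K * |b - a|)
    (a b : ℝ) : ‖f b - f a - (b - a) • f' a‖ ≤ K * (b - a) ^ 2 := by
  set g : ℝ → E2 := fun t => f t - t • f' a with hg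
  have hg' : ∀ t, HasDerivAt g (f' t - f' a) t := by
    intro t
    exact (hf t).sub (by simpa using (hasDerivAt_id t).smul_const (f' a))
  have hbound : ∀ t : ℝ, t ∈ Icc (min a b) (max a b) → ‖f' t - f' a‖ ≤ K * |b - a| := by
    intro t ht
    refine (hlip a t).trans ?_
    have h1 : |t - a| ≤ |b - a| := by
      rcases ht with ⟨h1, h2⟩
      rcases le_total a b with hab | hab
      · rw [min_eq_left hab] at h1; rw [max_eq_right hab] at h2
        rw [abs_of_nonneg (by linarith), abs_of_nonneg (by linarith)]; linarith
      · rw [min_eq_right hab] at h1; rw [max_eq_left hab] at h2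
        rw [abs_of_nonpos (by linarith), abs_of_nonpos (by linarith)]; linarith
    nlinarith [abs_nonneg (t - a)]
  have key : ‖g b - g a‖ ≤ K * |b - a| * |b - a| := by
    rcases le_total a b with hab | hab
    · have := norm_image_sub_le_of_norm_deriv_le_segment'
        (f := g) (f' := fun t => f' t - f' a) (a := a) (b := b) (C := K * |b - a|)
        (fun t _ => (hg' t).hasDerivWithinAt)
        (fun t ht => hbound t (by
          rw [min_eq_left hab, max_eq_right hab]; exact Ico_subset_Icc_self ht))
        b (right_mem_Icc.2 hab)
      rw [abs_of_nonneg (by linarith : (0:ℝ) ≤ b - a)] at this ⊢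
      exact this
    · have := norm_image_sub_le_of_norm_deriv_le_segment'
        (f := g) (f' := fun t => f' t - f' a) (a := b) (b := a) (C := K * |b - a|)
        (fun t _ => (hg' t).hasDerivWithinAt)
        (fun t ht => hbound t (by
          rw [min_eq_right hab, max_eq_left hab]; exact Ico_subset_Icc_self ht))
        a (right_mem_Icc.2 hab)
      rw [abs_of_nonpos (by linarith : b - a ≤ 0)] at this ⊢
      rw [norm_sub_rev]
      calc ‖g a - g b‖ ≤ K * -(b - a) * (a - b) := this
        _ = K * -(b - a) * -(b - a) := by ring
  have hgba : g b - g a = f b - f a - (b - a) • f' a := by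
    simp only [hg]
    rw [sub_smul]
    abel
  rw [hgba] at key
  calc ‖f b - f a - (b - a) • f' a‖ ≤ K * |b - a| * |b - a| := key
    _ = K * (b - a) ^ 2 := by rw [mul_assoc, ← abs_mul, ← sq, abs_sq]

/-- Central difference estimate: third order. -/
lemma aux_central (f f' f'' : ℝ → E2) (hf : ∀ t, HasDerivAt f (f' t) t)
    (hf' : ∀ t, HasDerivAt f' (f'' t) t)
    (K : ℝ) (hK0 : 0 ≤ K) (hlip : ∀ a b : ℝ, ‖f'' b - f'' a‖ ≤ K * |b - a|)
    (ρ h : ℝ) (hh : 0 ≤ h) :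
    ‖f (ρ + h) - f (ρ - h) - (2 * h) • f' ρ‖ ≤ 2 * K * h ^ 3 := by
  set g : ℝ → E2 := fun t => f (ρ + t) - f (ρ - t) - (2 * t) • f' ρ with hg
  set G : ℝ → E2 := fun t => (f' (ρ + t) - f' ρ - t • f'' ρ)
      + (f' (ρ - t) - f' ρ + t • f'' ρ) with hG
  have hg' : ∀ t, HasDerivAt g (G t) t := by
    intro t
    have h1 : HasDerivAt (fun t : ℝ => f (ρ + t)) ((1:ℝ) • f' (ρ + t)) t :=
      (hf (ρ + t)).scomp t ((hasDerivAt_id t).const_add ρ)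
    have h2 : HasDerivAt (fun t : ℝ => f (ρ - t)) ((-1 : ℝ) • f' (ρ - t)) t := by
      have := (hf (ρ - t)).scomp t ((hasDerivAt_id t).const_sub ρ)
      exact this
    have h3 : HasDerivAt (fun t : ℝ => (2 * t) • f' ρ) ((2:ℝ) • f' ρ) t := by
      simpa using ((hasDerivAt_id t).const_mul 2).smul_const (f' ρ)
    have := (h1.sub h2).sub h3
    refine this.congr_deriv ?_
    simp only [hG, neg_one_smul, one_smul]
    rw [two_smul]; abel
  have hbound : ∀ t : ℝ, t ∈ Icc (0:ℝ) h → ‖G t‖ ≤ 2 * K * h ^ 2 := by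
    intro t ht
    have e1 := aux_taylor1 f' f'' hf' K hK0 hlip ρ (ρ + t)
    have e2 := aux_taylor1 f' f'' hf' K hK0 hlip ρ (ρ - t)
    rw [add_sub_cancel_left] at e1
    have hsr : ρ - t - ρ = -t := by ring
    rw [hsr, neg_smul, sub_neg_eq_add, neg_sq] at e2
    have ht2 : t ^ 2 ≤ h ^ 2 := by nlinarith [ht.1, ht.2]
    have hGt : ‖G t‖ ≤ K * t ^ 2 + K * t ^ 2 := by
      simp only [hG]; exact le_trans (norm_add_le _ _) (by linarith)
    nlinarith
  have key : ‖g h - g 0‖ ≤ 2 * K * h ^ 2 * (h - 0) :=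
    norm_image_sub_le_of_norm_deriv_le_segment'
      (f := g) (f' := G) (a := 0) (b := h) (C := 2 * K * h ^ 2)
      (fun t _ => (hg' t).hasDerivWithinAt)
      (fun t ht => hbound t (Ico_subset_Icc_self ht))
      h (right_mem_Icc.2 hh)
  have hg0 : g 0 = 0 := by simp [hg]
  rw [hg0, sub_zero] at key
  calc ‖f (ρ + h) - f (ρ - h) - (2 * h) • f' ρ‖ = ‖g h‖ := rfl
    _ ≤ 2 * K * h ^ 2 * (h - 0) := key
    _ = 2 * K * h ^ 3 := by ring

/-- Key quadratic inequality for norms. -/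
lemma aux_key (A B : E2) (hpos : 0 < ‖A + B‖) :
    ‖A‖ + ‖B‖ - ‖A + B‖ ≤ ‖A - B‖ ^ 2 / ‖A + B‖ := by
  rw [le_div_iff₀ hpos]
  have h1 : ‖A + B‖ ^ 2 = ‖A‖ ^ 2 + 2 * ⟪A, B⟫ + ‖B‖ ^ 2 := norm_add_sq_real A B
  have h2 : ‖A - B‖ ^ 2 = ‖A‖ ^ 2 - 2 * ⟪A, B⟫ + ‖B‖ ^ 2 := norm_sub_sq_real A B
  have h3 : ⟪A, B⟫ ≤ ‖A‖ * ‖B‖ := real_inner_le_norm A B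
  have h4 : ‖A + B‖ ≤ ‖A‖ + ‖B‖ := norm_add_le A B
  nlinarith [sq_nonneg (‖A‖ - ‖B‖), hpos.le, mul_nonneg (sub_nonneg.2 h4) hpos.le]

set_option maxHeartbeats 1000000 in
/-- second order consistency of the averaged discrete length element:
`(q_j + q_{j+1})/2 = |x_ρ(ρ_j)| + O(h²)`. -/
theorem discrete_length_element_consistency
    (x : ℝ → E2) (c₀ C₀ : ℝ) (hc₀ : 0 < c₀) (hcC : c₀ ≤ C₀)
    (hx : ContDiff ℝ 4 x)
    (hper : ∀ ρ, x (ρ + 1) = x ρ)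
    (hlow : ∀ ρ, c₀ ≤ ‖deriv x ρ‖) (hup : ∀ ρ, ‖deriv x ρ‖ ≤ C₀) :
    ∃ C > (0:ℝ), ∃ hstar > (0:ℝ), ∀ J : ℕ, 0 < J → (1:ℝ)/J ≤ hstar → ∀ j : ℤ,
      |(‖x (j * ((1:ℝ)/J)) - x ((j-1) * ((1:ℝ)/J))‖ / ((1:ℝ)/J)
          + ‖x ((j+1) * ((1:ℝ)/J)) - x (j * ((1:ℝ)/J))‖ / ((1:ℝ)/J)) / 2
        - ‖deriv x (j * ((1:ℝ)/J))‖|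
      ≤ C * ((1:ℝ)/J) ^ 2 := by
  -- set up the derivatives
  set x1 := deriv x with hx1def
  set x2 := deriv x1 with hx2def
  set x3 := deriv x2 with hx3def
  have hx4 : ContDiff ℝ (3 + 1) x := by norm_num; exact hx
  obtain ⟨hdx, -, hx3c⟩ := contDiff_succ_iff_deriv.mp hx4
  have hx3c' : ContDiff ℝ (2 + 1) x1 := by norm_num; exact hx3c
  obtain ⟨hdx1, -, hx2c⟩ := contDiff_succ_iff_deriv.mp hx3c'
  have hx2c' : ContDiff ℝ (1 + 1) x2 := by norm_num; exact hx2c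
  obtain ⟨hdx2, -, hx1c⟩ := contDiff_succ_iff_deriv.mp hx2c'
  have hd1 : ∀ t, HasDerivAt x (x1 t) t := fun t => (hdx t).hasDerivAt
  have hd2 : ∀ t, HasDerivAt x1 (x2 t) t := fun t => (hdx1 t).hasDerivAt
  have hd3 : ∀ t, HasDerivAt x2 (x3 t) t := fun t => (hdx2 t).hasDerivAt
  -- periodicity and global bounds on derivatives
  have hpx : Function.Periodic x 1 := hper
  have hpx1 : Function.Periodic x1 1 := aux_periodic_deriv x hpx
  have hpx2 : Function.Periodic x2 1 := aux_periodic_deriv x1 hpx1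
  have hpx3 : Function.Periodic x3 1 := aux_periodic_deriv x2 hpx2
  obtain ⟨K2, hK20, hK2⟩ := aux_bound_of_periodic x2 hx2c'.continuous hpx2
  obtain ⟨K3, hK30, hK3⟩ := aux_bound_of_periodic x3 hx1c.continuous hpx3
  have hlip1 : ∀ a b : ℝ, ‖x1 b - x1 a‖ ≤ K2 * |b - a| := fun a b =>
    aux_lip x1 x2 hd2 K2 hK2 a b
  have hlip2 : ∀ a b : ℝ, ‖x2 b - x2 a‖ ≤ K3 * |b - a| := fun a b =>
    aux_lip x2 x3 hd3 K3 hK3 a b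
  -- the constants
  refine ⟨2 * K2 ^ 2 / c₀ + K3 + 1, by positivity, min 1 (c₀ / (2 * K3 + 1)),
    lt_min one_pos (by positivity), ?_⟩
  intro J hJ hJh j
  set h : ℝ := (1:ℝ) / J with hhdef
  have hh : 0 < h := by
    have : (0:ℝ) < J := by exact_mod_cast hJ
    positivity
  have hh1 : h ≤ 1 := le_trans hJh (min_le_left _ _)
  have hh2 : 2 * K3 * h ≤ c₀ := by
    have h2 : h ≤ c₀ / (2 * K3 + 1) := le_trans hJh (min_le_right _ _)
    rw [le_div_iff₀ (by positivity)] at h2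
    nlinarith
  set ρ : ℝ := (j : ℝ) * h with hρdef
  have em : ((j : ℝ) - 1) * h = ρ - h := by rw [hρdef]; ring
  have ep : ((j : ℝ) + 1) * h = ρ + h := by rw [hρdef]; ring
  rw [em, ep]
  set v : E2 := x1 ρ with hvdef
  set A : E2 := x ρ - x (ρ - h) with hAdef
  set B : E2 := x (ρ + h) - x ρ with hBdef
  have hnv1 : c₀ ≤ ‖v‖ := hlow ρ
  -- Taylor estimates
  have eA : ‖A - h • v‖ ≤ K2 * h ^ 2 := by
    have := aux_taylor1 x x1 hd1 K2 hK20 hlip1 ρ (ρ - h)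
    have hsr : ρ - h - ρ = -h := by ring
    rw [hsr, neg_smul, sub_neg_eq_add, neg_sq] at this
    have hAe : A - h • v = -(x (ρ - h) - x ρ + h • v) := by
      rw [hAdef, hvdef]; abel
    rw [hAe, norm_neg]
    exact this
  have eB : ‖B - h • v‖ ≤ K2 * h ^ 2 := by
    have := aux_taylor1 x x1 hd1 K2 hK20 hlip1 ρ (ρ + h)
    rw [add_sub_cancel_left] at this
    exact this
  have eAB : ‖(A + B) - (2 * h) • v‖ ≤ 2 * K3 * h ^ 3 := by
    have := aux_central x x1 x2 hd1 hd2 K3 hK30 hlip2 ρ h hh.le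
    have hABe : A + B = x (ρ + h) - x (ρ - h) := by rw [hAdef, hBdef]; abel
    rw [hABe]
    exact this
  have eD : ‖A - B‖ ≤ 2 * K2 * h ^ 2 := by
    have hD : A - B = (A - h • v) - (B - h • v) := by abel
    rw [hD]
    calc ‖(A - h • v) - (B - h • v)‖ ≤ ‖A - h • v‖ + ‖B - h • v‖ := norm_sub_le _ _
      _ ≤ 2 * K2 * h ^ 2 := by linarith
  clear_value h ρ v A B
  -- norm estimates
  have hsmul : ‖(2 * h) • v‖ = 2 * h * ‖v‖ := by
    rw [norm_smul, Real.norm_eq_abs, abs_of_pos (by positivity)]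
  have habs : |‖A + B‖ - 2 * h * ‖v‖| ≤ 2 * K3 * h ^ 3 := by
    rw [← hsmul]
    exact (abs_norm_sub_norm_le _ _).trans eAB
  rw [abs_le] at habs
  have hK3h3 : 2 * K3 * h ^ 3 ≤ c₀ * h := by nlinarith
  have hslow : c₀ * h ≤ ‖A + B‖ := by nlinarith [mul_le_mul_of_nonneg_left hnv1 hh.le]
  have hspos : 0 < ‖A + B‖ := lt_of_lt_of_le (by positivity) hslow
  have htri : ‖A + B‖ ≤ ‖A‖ + ‖B‖ := norm_add_le A B
  have hkey : ‖A‖ + ‖B‖ - ‖A + B‖ ≤ (4 * K2 ^ 2 / c₀) * h ^ 3 := by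
    have h1 := aux_key A B hspos
    have h2 : ‖A - B‖ ^ 2 / ‖A + B‖ ≤ (2 * K2 * h ^ 2) ^ 2 / (c₀ * h) := by
      apply div_le_div₀ (by positivity)
      · nlinarith [norm_nonneg (A - B)]
      · positivity
      · exact hslow
    have h3 : (2 * K2 * h ^ 2) ^ 2 / (c₀ * h) = (4 * K2 ^ 2 / c₀) * h ^ 3 := by
      field_simp
      ring
    rw [h3] at h2
    linarith
  -- combine
  have hmain : |‖A‖ + ‖B‖ - 2 * h * ‖v‖| ≤ (4 * K2 ^ 2 / c₀ + 2 * K3) * h ^ 3 := by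
    rw [abs_le]
    constructor
    · nlinarith
    · nlinarith
  have hgoal_eq : (‖A‖ / h + ‖B‖ / h) / 2 - ‖v‖ = (‖A‖ + ‖B‖ - 2 * h * ‖v‖) / (2 * h) := by
    field_simp
  rw [hgoal_eq, abs_div, abs_of_pos (by positivity : (0:ℝ) < 2 * h), div_le_iff₀ (by positivity)]
  have hh3 : 0 < h ^ 3 := by positivity
  calc |‖A‖ + ‖B‖ - 2 * h * ‖v‖| ≤ (4 * K2 ^ 2 / c₀ + 2 * K3) * h ^ 3 := hmain
    _ ≤ (2 * K2 ^ 2 / c₀ + K3 + 1) * h ^ 2 * (2 * h) := by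
        have : (2 * K2 ^ 2 / c₀ + K3 + 1) * h ^ 2 * (2 * h)
            = (4 * K2 ^ 2 / c₀ + 2 * K3 + 2) * h ^ 3 := by ring
        rw [this]
        nlinarith
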